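/- Let ε₀ > 1 be a real number. Then p(k) → 1 as k → ∞. (In the paper's terms: as the window length k goes to infinity, the naive dynamic window-level Granger causality test detects the causality with probability tending to one, i.e. it degenerates to the traditional channel-level Granger causality test.) -/

import Mathlib

open MeasureTheory ProbabilityTheory Filter
open scoped ENNReal

section Aux

open Real Set

lemma gammaPDF_measurable (a r : ℝ) : Measurable (gammaPDF a r) :=
  (measurable_gammaPDFReal a r).ennreal_ofReal

/-- The exponential moment (Laplace/moment generating function) of the Gamma distribution. -/
lemma gamma_mgf {a r s : ℝ} (ha : 0 < a) (hr : 0 < r) (hs : s < r) :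
    ∫⁻ x, ENNReal.ofReal (Real.exp (s * x)) ∂(gammaMeasure a r)
      = ENNReal.ofReal ((r / (r - s)) ^ a) := by
  have hrs : 0 < r - s := sub_pos.mpr hs
  have hmeas : Measurable fun x : ℝ => ENNReal.ofReal (Real.exp (s * x)) :=
    (Real.measurable_exp.comp (measurable_id.const_mul s)).ennreal_ofReal
  rw [gammaMeasure, lintegral_withDensity_eq_lintegral_mul _ (gammaPDF_measurable a r) hmeas]
  have key : ∀ x : ℝ, gammaPDF a r x * ENNReal.ofReal (Real.exp (s * x))
      = ENNReal.ofReal ((r / (r - s)) ^ a) * gammaPDF a (r - s) x := by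
    intro x
    by_cases hx : 0 ≤ x
    · rw [gammaPDF_of_nonneg hx, gammaPDF_of_nonneg hx,
        ← ENNReal.ofReal_mul (by
          have hX : (0:ℝ) ≤ x ^ (a - 1) := Real.rpow_nonneg hx _
          have h1 : (0:ℝ) ≤ r ^ a / Real.Gamma a := by positivity
          exact mul_nonneg (mul_nonneg h1 hX) (Real.exp_nonneg _)),
        ← ENNReal.ofReal_mul (by positivity)]
      congr 1
      have h1 : (r / (r - s)) ^ a * (r - s) ^ a = r ^ a := by
        rw [← Real.mul_rpow (by positivity) hrs.le, div_mul_cancel₀ _ hrs.ne']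
      have h2 : Real.exp (-((r - s) * x)) = Real.exp (-(r * x)) * Real.exp (s * x) := by
        rw [← Real.exp_add]; ring_nf
      rw [← h1, h2]; ring
    · push_neg at hx
      rw [gammaPDF_of_neg hx, gammaPDF_of_neg hx, zero_mul, mul_zero]
  calc (∫⁻ x, (fun x => gammaPDF a r x) x * (fun x : ℝ => ENNReal.ofReal (Real.exp (s * x))) x)
      = ∫⁻ x, ENNReal.ofReal ((r / (r - s)) ^ a) * gammaPDF a (r - s) x :=
        lintegral_congr key
    _ = ENNReal.ofReal ((r / (r - s)) ^ a) * ∫⁻ x, gammaPDF a (r - s) x :=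
        lintegral_const_mul _ (gammaPDF_measurable a (r - s))
    _ = ENNReal.ofReal ((r / (r - s)) ^ a) := by
        rw [lintegral_gammaPDF_eq_one ha hrs, mul_one]

/-- Chernoff bound for the upper tail of a Gamma distribution. -/
lemma gamma_tail_upper {a r s : ℝ} (t : ℝ) (ha : 0 < a) (hr : 0 < r) (hs : 0 < s)
    (hsr : s < r) :
    gammaMeasure a r {x | t < x}
      ≤ ENNReal.ofReal (Real.exp (-(s * t)) * (r / (r - s)) ^ a) := by
  set f : ℝ → ℝ≥0∞ := fun x => ENNReal.ofReal (Real.exp (s * x)) with hf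
  have hmeas : Measurable f :=
    (Real.measurable_exp.comp (measurable_id.const_mul s)).ennreal_ofReal
  have hsub : {x : ℝ | t < x} ⊆ {x : ℝ | ENNReal.ofReal (Real.exp (s * t)) ≤ f x} := by
    intro x (hx : t < x)
    exact ENNReal.ofReal_le_ofReal (Real.exp_le_exp.mpr
      (mul_le_mul_of_nonneg_left hx.le hs.le))
  refine le_trans (measure_mono hsub) ?_
  have hne : ENNReal.ofReal (Real.exp (s * t)) ≠ 0 := by
    simp [ENNReal.ofReal_eq_zero, not_le, Real.exp_pos]
  have := meas_ge_le_lintegral_div hmeas.aemeasurable (μ := gammaMeasure a r)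
    hne ENNReal.ofReal_ne_top
  refine this.trans ?_
  rw [gamma_mgf ha hr hsr]
  have hrw : Real.exp (-(s * t)) * (r / (r - s)) ^ a = (r / (r - s)) ^ a / Real.exp (s * t) := by
    rw [Real.exp_neg]; ring
  rw [hrw, ENNReal.ofReal_div_of_pos (Real.exp_pos _)]

/-- Chernoff bound for the lower tail of a Gamma distribution. -/
lemma gamma_tail_lower {a r s : ℝ} (t : ℝ) (ha : 0 < a) (hr : 0 < r) (hs : 0 < s) :
    gammaMeasure a r {x | x ≤ t}
      ≤ ENNReal.ofReal (Real.exp (s * t) * (r / (r + s)) ^ a) := by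
  set f : ℝ → ℝ≥0∞ := fun x => ENNReal.ofReal (Real.exp (-s * x)) with hf
  have hmeas : Measurable f :=
    (Real.measurable_exp.comp (measurable_id.const_mul (-s))).ennreal_ofReal
  have hsub : {x : ℝ | x ≤ t} ⊆ {x : ℝ | ENNReal.ofReal (Real.exp (-s * t)) ≤ f x} := by
    intro x (hx : x ≤ t)
    refine ENNReal.ofReal_le_ofReal (Real.exp_le_exp.mpr ?_)
    nlinarith
  refine le_trans (measure_mono hsub) ?_
  have hne : ENNReal.ofReal (Real.exp (-s * t)) ≠ 0 := by
    simp [ENNReal.ofReal_eq_zero, not_le, Real.exp_pos]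
  have hmgf : ∫⁻ x, f x ∂(gammaMeasure a r) = ENNReal.ofReal ((r / (r + s)) ^ a) := by
    have := gamma_mgf (s := -s) ha hr (by linarith)
    rw [hf]
    simpa [sub_neg_eq_add] using this
  have := meas_ge_le_lintegral_div hmeas.aemeasurable (μ := gammaMeasure a r)
    hne ENNReal.ofReal_ne_top
  refine this.trans ?_
  rw [hmgf]
  have hrw : Real.exp (s * t) * (r / (r + s)) ^ a = (r / (r + s)) ^ a / Real.exp (-s * t) := by
    rw [show (-s * t) = -(s * t) by ring, Real.exp_neg]
    field_simp
  rw [hrw, ENNReal.ofReal_div_of_pos (Real.exp_pos _)]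

lemma tendsto_rpow_nat_div_two {ρ : ℝ} (h0 : 0 ≤ ρ) (h1 : ρ < 1) :
    Tendsto (fun k : ℕ => ρ ^ ((k : ℝ) / 2)) atTop (nhds 0) := by
  have heq : ∀ k : ℕ, ρ ^ ((k : ℝ) / 2) = (ρ ^ ((1 : ℝ) / 2)) ^ k := by
    intro k
    rw [← Real.rpow_natCast (ρ ^ ((1 : ℝ) / 2)) k, ← Real.rpow_mul h0]
    norm_num
    ring_nf
  simp_rw [heq]
  exact tendsto_pow_atTop_nhds_zero_of_lt_one (Real.rpow_nonneg h0 _)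
    (Real.rpow_lt_one h0 h1 (by norm_num))

lemma exp_mul_one_sub_lt_one {u : ℝ} (hu : 0 < u) : Real.exp u * (1 - u) < 1 := by
  have h1 : 1 - u < Real.exp (-u) := by
    have := Real.add_one_lt_exp (x := -u) (by linarith)
    linarith
  have h2 : Real.exp u * (1 - u) < Real.exp u * Real.exp (-u) :=
    mul_lt_mul_of_pos_left h1 (Real.exp_pos _)
  rwa [← Real.exp_add, add_neg_cancel, Real.exp_zero] at h2

lemma exp_neg_mul_one_add_lt_one {u : ℝ} (hu : 0 < u) : Real.exp (-u) * (1 + u) < 1 := by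
  have h1 : 1 + u < Real.exp u := by
    have := Real.add_one_lt_exp (x := u) (by linarith)
    linarith
  have h2 : Real.exp (-u) * (1 + u) < Real.exp (-u) * Real.exp u :=
    mul_lt_mul_of_pos_left h1 (Real.exp_pos _)
  rwa [← Real.exp_add, neg_add_cancel, Real.exp_zero] at h2

end Aux

/-- `p ε₀ k` is the probability of the event `{(x, y) : x > y}` under the product of the
Gamma distribution with shape `k/2` and rate `1/(2ε₀)` and the Gamma distribution with
shape `k/2` and rate `1/2` (the chi-square distribution with `k` degrees of freedom):
the probability that the window-level F-statistic of the naive DWGC method exceeds the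
threshold `1` for a window of length `k` when the expected F-ratio is `ε₀`. -/
noncomputable def naiveDWGCDetectProb (ε₀ : ℝ) (k : ℕ) : ℝ :=
  (((gammaMeasure ((k : ℝ) / 2) (1 / (2 * ε₀))).prod
      (gammaMeasure ((k : ℝ) / 2) (1 / 2)))
    {q : ℝ × ℝ | q.1 > q.2}).toReal

set_option maxHeartbeats 1600000 in
/-- As the window length `k` goes to infinity, the naive dynamic window-level Granger
causality test detects the causality with probability tending to one, i.e. it degenerates
to the traditional channel-level Granger causality test. -/
theorem naiveDWGCDetectProb_tendsto_one (ε₀ : ℝ) (hε₀ : 1 < ε₀) :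
    Tendsto (fun k : ℕ => naiveDWGCDetectProb ε₀ k) atTop (nhds 1) := by
  have hε : (0:ℝ) < ε₀ := lt_trans one_pos hε₀
  -- threshold slope and Chernoff parameters
  set c : ℝ := (1 + ε₀) / 2 with hc
  have hc1 : 1 < c := by rw [hc]; linarith
  have hcε : c < ε₀ := by rw [hc]; linarith
  have hcpos : 0 < c := by linarith
  set r₁ : ℝ := 1 / (2 * ε₀) with hr₁
  set r₂ : ℝ := 1 / 2 with hr₂
  have hr₁pos : 0 < r₁ := by rw [hr₁]; positivity
  have hr₂pos : 0 < r₂ := by norm_num [hr₂]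
  set s₁ : ℝ := (ε₀ - 1) / (8 * ε₀ * c) with hs₁
  set s₂ : ℝ := (c - 1) / (4 * c) with hs₂
  have hs₁pos : 0 < s₁ := by
    rw [hs₁]; exact div_pos (by linarith) (by positivity)
  have hs₂pos : 0 < s₂ := by
    rw [hs₂]; exact div_pos (by linarith) (by positivity)
  have hs₂r₂ : s₂ < r₂ := by
    rw [hs₂, hr₂, div_lt_div_iff₀ (by positivity) (by norm_num)]
    nlinarith
  -- the two geometric ratios
  set ρ₁ : ℝ := Real.exp (2 * s₁ * c) * (r₁ / (r₁ + s₁)) with hρ₁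
  set ρ₂ : ℝ := Real.exp (-(2 * s₂ * c)) * (r₂ / (r₂ - s₂)) with hρ₂
  have hρ₁pos : 0 < ρ₁ := by rw [hρ₁]; positivity
  have hρ₂pos : 0 < ρ₂ := by
    rw [hρ₂]
    have : 0 < r₂ - s₂ := by linarith
    positivity
  have hρ₁lt : ρ₁ < 1 := by
    set u : ℝ := 2 * s₁ * c with hu
    have hupos : 0 < u := by rw [hu]; positivity
    have huval : u = (ε₀ - 1) / (4 * ε₀) := by
      rw [hu, hs₁]; field_simp; ring
    have hexp := exp_mul_one_sub_lt_one hupos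
    -- algebraic fact : r₁ ≤ (1 - u) * (r₁ + s₁)
    have hfact : r₁ ≤ (1 - u) * (r₁ + s₁) := by
      have key : (1 - u) * (r₁ + s₁) - r₁ = (ε₀ - 1) ^ 2 / (16 * ε₀ ^ 2 * (1 + ε₀)) := by
        rw [huval, hr₁, hs₁, hc]
        field_simp
        ring
      have hnn : (0:ℝ) ≤ (ε₀ - 1) ^ 2 / (16 * ε₀ ^ 2 * (1 + ε₀)) := by positivity
      exact sub_nonneg.mp (hnn.trans_eq key.symm)
    -- conclude ρ₁ < 1
    have hEpos := Real.exp_pos u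
    have hden : 0 < r₁ + s₁ := by positivity
    rw [hρ₁, mul_div_assoc', div_lt_one hden]
    nlinarith [mul_lt_mul_of_pos_right hexp hden, mul_le_mul_of_nonneg_left hfact hEpos.le]
  have hρ₂lt : ρ₂ < 1 := by
    set u : ℝ := 2 * s₂ * c with hu
    have hupos : 0 < u := by rw [hu]; positivity
    have huval : u = (c - 1) / 2 := by
      rw [hu, hs₂]; field_simp; ring
    have hexp := exp_neg_mul_one_add_lt_one hupos
    have hden : 0 < r₂ - s₂ := by linarith
    -- algebraic fact : r₂ ≤ (1 + u) * (r₂ - s₂)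
    have hfact : r₂ ≤ (1 + u) * (r₂ - s₂) := by
      have key : (1 + u) * (r₂ - s₂) - r₂ = (c - 1) ^ 2 / (8 * c) := by
        rw [huval, hr₂, hs₂]
        field_simp
        ring
      have hnn : (0:ℝ) ≤ (c - 1) ^ 2 / (8 * c) := by positivity
      exact sub_nonneg.mp (hnn.trans_eq key.symm)
    have hEpos := Real.exp_pos (-u)
    rw [hρ₂, mul_div_assoc', div_lt_one hden]
    nlinarith [mul_lt_mul_of_pos_right hexp hden, mul_le_mul_of_nonneg_left hfact hEpos.le]
  -- the bounding sequences
  set α : ℕ → ℝ := fun k => Real.exp (s₁ * (c * k)) * (r₁ / (r₁ + s₁)) ^ ((k : ℝ) / 2)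
    with hα
  set β : ℕ → ℝ := fun k =>
      Real.exp (-(s₂ * (c * k))) * (r₂ / (r₂ - s₂)) ^ ((k : ℝ) / 2) with hβ
  have hαeq : ∀ k : ℕ, α k = ρ₁ ^ ((k : ℝ) / 2) := by
    intro k
    simp only [hα, hρ₁]
    have h1 : s₁ * (c * k) = (2 * s₁ * c) * ((k : ℝ) / 2) := by ring
    rw [h1, Real.exp_mul, ← Real.mul_rpow (Real.exp_nonneg _) (by positivity)]
  have hβeq : ∀ k : ℕ, β k = ρ₂ ^ ((k : ℝ) / 2) := by
    intro k
    simp only [hβ, hρ₂]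
    have hden : 0 < r₂ - s₂ := by linarith
    have h1 : -(s₂ * (c * k)) = (-(2 * s₂ * c)) * ((k : ℝ) / 2) := by ring
    rw [h1, Real.exp_mul, ← Real.mul_rpow (Real.exp_nonneg _) (by positivity)]
  have hαlim : Tendsto α atTop (nhds 0) := by
    rw [funext hαeq]
    exact tendsto_rpow_nat_div_two hρ₁pos.le hρ₁lt
  have hβlim : Tendsto β atTop (nhds 0) := by
    rw [funext hβeq]
    exact tendsto_rpow_nat_div_two hρ₂pos.le hρ₂lt
  have hαnonneg : ∀ k, 0 ≤ α k := by
    intro k; rw [hαeq k]; exact Real.rpow_nonneg hρ₁pos.le _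
  have hβnonneg : ∀ k, 0 ≤ β k := by
    intro k; rw [hβeq k]; exact Real.rpow_nonneg hρ₂pos.le _
  -- squeeze
  have hlow : Tendsto (fun k : ℕ => 1 - α k - β k) atTop (nhds 1) := by
    have := (tendsto_const_nhds (x := (1:ℝ)) (f := atTop (α := ℕ))).sub hαlim |>.sub hβlim
    simpa using this
  refine tendsto_of_tendsto_of_tendsto_of_le_of_le' hlow tendsto_const_nhds ?_ ?_
  · -- lower bound, eventually
    filter_upwards [eventually_ge_atTop 1] with k hk
    have hak : 0 < (k : ℝ) / 2 := by
      have : (1:ℝ) ≤ (k : ℝ) := by exact_mod_cast hk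
      linarith
    set μ : Measure ℝ := gammaMeasure ((k : ℝ) / 2) r₁ with hμ
    set ν : Measure ℝ := gammaMeasure ((k : ℝ) / 2) r₂ with hν
    haveI : IsProbabilityMeasure μ := isProbabilityMeasure_gammaMeasure hak hr₁pos
    haveI : IsProbabilityMeasure ν := isProbabilityMeasure_gammaMeasure hak hr₂pos
    set t : ℝ := c * k with ht
    -- tail bounds in real form
    have hA : (μ {x | x ≤ t}).toReal ≤ α k := by
      refine ENNReal.toReal_le_of_le_ofReal (hαnonneg k) ?_
      exact gamma_tail_lower t hak hr₁pos hs₁pos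
    have hB : (ν {y | t < y}).toReal ≤ β k := by
      refine ENNReal.toReal_le_of_le_ofReal (hβnonneg k) ?_
      exact gamma_tail_upper t hak hr₂pos hs₂pos hs₂r₂
    -- complement identities
    have hμc : (μ {x | t < x}).toReal = 1 - (μ {x | x ≤ t}).toReal := by
      have e : {x : ℝ | t < x} = {x : ℝ | x ≤ t}ᶜ := by
        ext x; simp [not_le]
      rw [e, measure_compl (by exact measurableSet_Iic) (measure_ne_top _ _), measure_univ,
        ENNReal.toReal_sub_of_le prob_le_one ENNReal.one_ne_top, ENNReal.toReal_one]
    have hνc : (ν {y | y ≤ t}).toReal = 1 - (ν {y | t < y}).toReal := by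
      have e : {y : ℝ | y ≤ t} = {y : ℝ | t < y}ᶜ := by
        ext y; simp [not_lt]
      rw [e, measure_compl (by exact measurableSet_Ioi) (measure_ne_top _ _), measure_univ,
        ENNReal.toReal_sub_of_le prob_le_one ENNReal.one_ne_top, ENNReal.toReal_one]
    -- product bound
    have hsub : {x : ℝ | t < x} ×ˢ {y : ℝ | y ≤ t} ⊆ {q : ℝ × ℝ | q.1 > q.2} := by
      rintro ⟨x, y⟩ ⟨hx, hy⟩
      exact lt_of_le_of_lt (show y ≤ t from hy) (show t < x from hx)
    have hprod : μ {x | t < x} * ν {y | y ≤ t} ≤ (μ.prod ν) {q : ℝ × ℝ | q.1 > q.2} := by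
      rw [← MeasureTheory.Measure.prod_prod]
      exact measure_mono hsub
    have h1 : (μ {x | t < x}).toReal * (ν {y | y ≤ t}).toReal
        ≤ ((μ.prod ν) {q : ℝ × ℝ | q.1 > q.2}).toReal := by
      rw [← ENNReal.toReal_mul]
      exact ENNReal.toReal_mono (measure_ne_top _ _) hprod
    have hP : naiveDWGCDetectProb ε₀ k = ((μ.prod ν) {q : ℝ × ℝ | q.1 > q.2}).toReal := by
      rw [naiveDWGCDetectProb, hμ, hν, hr₁, hr₂]
    rw [hP]
    have ha0 : 0 ≤ (μ {x | x ≤ t}).toReal := ENNReal.toReal_nonneg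
    have hb0 : 0 ≤ (ν {y | t < y}).toReal := ENNReal.toReal_nonneg
    nlinarith [h1, hμc, hνc, hA, hB, mul_nonneg ha0 hb0]
  · -- upper bound 1
    filter_upwards [eventually_ge_atTop 1] with k hk
    have hak : 0 < (k : ℝ) / 2 := by
      have : (1:ℝ) ≤ (k : ℝ) := by exact_mod_cast hk
      linarith
    haveI : IsProbabilityMeasure (gammaMeasure ((k : ℝ) / 2) (1 / (2 * ε₀))) :=
      isProbabilityMeasure_gammaMeasure hak (by positivity)
    haveI : IsProbabilityMeasure (gammaMeasure ((k : ℝ) / 2) ((1:ℝ) / 2)) :=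
      isProbabilityMeasure_gammaMeasure hak (by norm_num)
    rw [naiveDWGCDetectProb]
    refine ENNReal.toReal_le_of_le_ofReal zero_le_one ?_
    rw [ENNReal.ofReal_one]
    exact prob_le_one
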